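/- Let γ be an elliptic Möbius transformation of ℍ with fixed point v and rotation angle θ. Then for every z ∈ ℍ, sinh(ρ(z, γz)/2) = sinh(ρ(z, v)) · |sin(θ/2)|. -/

import Mathlib

open Matrix UpperHalfPlane Real

abbrev SL2R := Matrix.SpecialLinearGroup (Fin 2) ℝ

/-- `γ` is an elliptic Möbius transformation with fixed point `v` and rotation angle `θ`:
it fixes `v` and, when conjugated by an element of PSL(2,ℝ) sending `v` to `i`, it acts
as the rotation by `θ` about `i`, represented by the matrix
`[[cos(θ/2), sin(θ/2)], [-sin(θ/2), cos(θ/2)]]`. -/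
def HasRotation (γ : SL2R) (v : UpperHalfPlane) (θ : ℝ) : Prop :=
  γ • v = v ∧
  ∃ g R : SL2R, g • v = UpperHalfPlane.I ∧
    (R : Matrix (Fin 2) (Fin 2) ℝ) =
      !![Real.cos (θ / 2), Real.sin (θ / 2); -Real.sin (θ / 2), Real.cos (θ / 2)] ∧
    ∀ z : UpperHalfPlane, (g * γ * g⁻¹) • z = R • z

lemma sinh_dist_I (w : ℍ) : Real.sinh (dist w UpperHalfPlane.I) = ‖(w:ℂ)^2 + 1‖ / (2 * w.im) := by
  have h1 : dist w UpperHalfPlane.I = 2 * (dist w UpperHalfPlane.I / 2) := by ring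
  rw [h1, Real.sinh_two_mul, UpperHalfPlane.sinh_half_dist, UpperHalfPlane.cosh_half_dist]
  have hy : (0:ℝ) < w.im := w.im_pos
  rw [UpperHalfPlane.I_im, UpperHalfPlane.coe_I, mul_one]
  have h2 : ((w:ℂ)^2 + 1) = ((w:ℂ) - Complex.I) * ((w:ℂ) - (starRingEnd ℂ) Complex.I) := by
    rw [Complex.conj_I]; ring_nf; rw [Complex.I_sq]; ring
  have hss : √w.im * √w.im = w.im := Real.mul_self_sqrt hy.le
  have hs : (0:ℝ) < √w.im := Real.sqrt_pos.2 hy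
  rw [h2, norm_mul, Complex.dist_eq, Complex.dist_eq]
  rw [show (2:ℝ) * w.im = 2 * (√w.im * √w.im) by rw [hss]]
  field_simp

lemma key (θ : ℝ) (R : SL2R)
    (hR : (R : Matrix (Fin 2) (Fin 2) ℝ) =
      !![Real.cos (θ / 2), Real.sin (θ / 2); -Real.sin (θ / 2), Real.cos (θ / 2)]) (w : ℍ) :
    Real.sinh (dist w (R • w) / 2) = Real.sinh (dist w UpperHalfPlane.I) * |Real.sin (θ / 2)| := by
  set c := Real.cos (θ / 2) with hc
  set s := Real.sin (θ / 2) with hs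
  have hcs : s^2 + c^2 = 1 := Real.sin_sq_add_cos_sq _
  have hy : (0:ℝ) < w.im := w.im_pos
  set D : ℂ := (-s : ℂ) * w + c with hD
  have hDre : D.re = -s * w.re + c := by simp [hD]
  have hDim : D.im = -s * w.im := by simp [hD]
  have hDne : D ≠ 0 := by
    intro h
    have h1 : D.im = 0 := by rw [h]; simp
    have h2 : D.re = 0 := by rw [h]; simp
    rw [hDim] at h1
    have hs0 : s = 0 := by
      rcases mul_eq_zero.1 h1 with h | h
      · linarith
      · exact absurd h hy.ne'
    rw [hDre, hs0] at h2
    simp at h2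
    rw [hs0, h2] at hcs
    norm_num at hcs
  have hnsq : (0:ℝ) < Complex.normSq D := Complex.normSq_pos.2 hDne
  have hw : ((R • w : ℍ) : ℂ) = ((c:ℂ) * w + s) / D := by
    rw [UpperHalfPlane.specialLinearGroup_apply]
    simp [hR, hD]
  have him : (R • w : ℍ).im = w.im / Complex.normSq D := by
    rw [UpperHalfPlane.im, hw, Complex.div_im]
    have hzre : ((c:ℂ) * w + s).re = c * w.re + s := by simp
    have hzim : ((c:ℂ) * w + s).im = c * w.im := by simp
    rw [hzre, hzim, hDre, hDim]
    field_simp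
    nlinarith [hcs]
  have hnum : (w:ℂ) - ((c:ℂ)*w+s)/D = ((-s : ℝ):ℂ) * ((w:ℂ)^2+1) / D := by
    rw [eq_div_iff hDne, sub_mul, div_mul_cancel₀ _ hDne, hD]
    push_cast
    ring
  have hsq : √(w.im * (w.im / Complex.normSq D)) = w.im / √(Complex.normSq D) := by
    rw [show w.im * (w.im / Complex.normSq D) = (w.im / √(Complex.normSq D))^2 by
      rw [div_pow, Real.sq_sqrt hnsq.le]; ring]
    exact Real.sqrt_sq (by positivity)
  have hsp : (0:ℝ) < √(Complex.normSq D) := Real.sqrt_pos.2 hnsq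
  rw [UpperHalfPlane.sinh_half_dist, sinh_dist_I, Complex.dist_eq, hw, him, hsq, hnum,
    norm_div, norm_mul, Complex.norm_real, Real.norm_eq_abs, abs_neg]
  simp only [Complex.norm_def]
  field_simp

theorem stmt7' (γ : SL2R) (v : UpperHalfPlane) (θ : ℝ) (hγ₀ : γ • v = v)
    (g R : SL2R) (hgv : g • v = UpperHalfPlane.I)
    (hR : (R : Matrix (Fin 2) (Fin 2) ℝ) =
      !![Real.cos (θ / 2), Real.sin (θ / 2); -Real.sin (θ / 2), Real.cos (θ / 2)])
    (hact : ∀ z : UpperHalfPlane, (g * γ * g⁻¹) • z = R • z) (z : UpperHalfPlane) :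
    Real.sinh (dist z (γ • z) / 2) = Real.sinh (dist z v) * |Real.sin (θ / 2)| := by
  have h1 : dist z (γ • z) = dist (g • z) (R • (g • z)) := by
    rw [← dist_smul g z (γ • z)]
    congr 1
    rw [← hact (g • z), smul_smul, smul_smul, inv_mul_cancel_right]
  have h2 : dist z v = dist (g • z) UpperHalfPlane.I := by
    rw [← hgv, dist_smul]
  rw [h1, h2, key θ R hR (g • z)]

/-- If γ is elliptic with fixed point v and rotation angle θ, then for every
z ∈ ℍ, sinh(ρ(z,γz)/2) = sinh(ρ(z,v))·|sin(θ/2)|. -/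
theorem stmt7 (γ : SL2R) (v : UpperHalfPlane) (θ : ℝ) (hγ : HasRotation γ v θ) :
    ∀ z : UpperHalfPlane,
      Real.sinh (dist z (γ • z) / 2) = Real.sinh (dist z v) * |Real.sin (θ / 2)| := by
  intro z
  obtain ⟨hfix, g, R, hgv, hR, hact⟩ := hγ
  exact stmt7' γ v θ hfix g R hgv hR hact z
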